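/- Let G be a finite abelian group and A ∈ B(G) a nice zero-sum sequence admitting a factorization into 2k+1 atoms each of length D*(G) as in the definition of nice. Then both 2k+1 and k·D*(G) + ⌊D*(G)/2⌋ belong to the set of lengths L(A); consequently ρ_{2k+1}(G) ≥ k·D*(G) + ⌊D*(G)/2⌋. -/

import Mathlib

open scoped Pointwise

section Defs

variable (G : Type*) [AddCommGroup G]

/-- `S` is a minimal zero-sum sequence (an atom of the monoid `B(G)` of zero-sum
sequences): it is nonempty, has sum zero, and no proper nonempty subsequence has sum zero. -/
def IsMinZS (S : Multiset G) : Prop :=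
  S ≠ 0 ∧ S.sum = 0 ∧ ∀ T : Multiset G, T ≤ S → T ≠ 0 → T ≠ S → T.sum ≠ 0

/-- `S` is a product of `k` atoms of `B(G)`. -/
def IsProdOfAtoms (k : ℕ) (S : Multiset G) : Prop :=
  ∃ L : Multiset (Multiset G), Multiset.card L = k ∧ (∀ U ∈ L, IsMinZS G U) ∧ L.sum = S

/-- `S` is a product of atoms of length `2`. -/
def IsProd2Atoms (S : Multiset G) : Prop :=
  ∃ L : Multiset (Multiset G), (∀ U ∈ L, IsMinZS G U ∧ Multiset.card U = 2) ∧ L.sum = S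

/-- The set of lengths of `A` in `B(G)`. -/
def LSet (A : Multiset G) : Set ℕ := { k | IsProdOfAtoms G k A }

/-- `U_k(G)`: the set of `m` such that some product of `k` atoms equals a product of `m` atoms. -/
def UkSet (k : ℕ) : Set ℕ :=
  { m | ∃ S : Multiset G, IsProdOfAtoms G k S ∧ IsProdOfAtoms G m S }

/-- `ρ_k(G) = sup U_k(G)`. -/
noncomputable def rho (k : ℕ) : ℕ := sSup (UkSet G k)

/-- The Davenport constant `D(G)`: the maximal length of a minimal zero-sum sequence. -/
noncomputable def Dav : ℕ :=
  sSup { n : ℕ | ∃ S : Multiset G, IsMinZS G S ∧ Multiset.card S = n }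

/-- `A` is pair-nice with factorization into `2k` atoms of length `d` (where `d` plays
the role of `D^*(G)`). -/
def PairNiceWith (d k : ℕ) (A : Multiset G) : Prop :=
  1 ≤ k ∧ ∃ (U : Fin (2 * k) → Multiset G) (g : Fin (2 * k) → G),
    (∀ i, IsMinZS G (U i) ∧ Multiset.card (U i) = d) ∧
    (∑ i, U i) = A ∧ (∀ i, g i ∈ U i) ∧
    IsProd2Atoms G (∑ i, ({g i} : Multiset G))

/-- `A` is pair-nice (with respect to `G`, with `d = D^*(G)`). -/
def PairNice (d : ℕ) (A : Multiset G) : Prop := ∃ k, PairNiceWith G d k A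

/-- `A` is nice with factorization into `2k+1` atoms of length `d` (where `d` plays the
role of `D^*(G)`), as in Definition 3.1 of the paper. -/
def NiceWith [DecidableEq G] (d k : ℕ) (A : Multiset G) : Prop :=
  1 ≤ k ∧ ∃ (U : Fin (2 * k + 1) → Multiset G) (g : Fin (2 * k + 1) → G),
    (∀ i, IsMinZS G (U i) ∧ Multiset.card (U i) = d) ∧
    (∑ i, U i) = A ∧ (∀ i, g i ∈ U i) ∧
    ((Odd d ∧ IsProd2Atoms G (A - ∑ i, ({g i} : Multiset G)) ∧
        ∃ W : Fin k → Multiset G, (∀ j, IsMinZS G (W j)) ∧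
          (∀ j : Fin k, Multiset.card (W j) = if (j : ℕ) = 0 then 3 else 2) ∧
          (∑ j, W j) = ∑ i, ({g i} : Multiset G)) ∨
      (Even d ∧ ∃ h : G, h ∈ A - ∑ i, ({g i} : Multiset G) ∧
        IsProd2Atoms G (A - ((∑ i, ({g i} : Multiset G)) + {h})) ∧
        IsProd2Atoms G ((∑ i, ({g i} : Multiset G)) + {h})))

/-- `A` is nice (with respect to `G`, with `d = D^*(G)`). -/
def Nice [DecidableEq G] (d : ℕ) (A : Multiset G) : Prop := ∃ k, NiceWith G d k A

end Defs

section MonoidDefs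

variable (H : Type*) [CommMonoid H]

/-- `U_k(H)` for a monoid `H`: the set of `m` such that some product of `k` irreducible
elements (atoms) of `H` equals a product of `m` atoms. -/
def UkM (k : ℕ) : Set ℕ :=
  { m | ∃ L L' : Multiset H, Multiset.card L = k ∧ Multiset.card L' = m ∧
      (∀ u ∈ L, Irreducible u) ∧ (∀ v ∈ L', Irreducible v) ∧ L.prod = L'.prod }

/-- `ρ_k(H) = sup U_k(H)`. -/
noncomputable def rhoM (k : ℕ) : ℕ := sSup (UkM H k)

end MonoidDefs

section Aux

variable {G : Type*} [AddCommGroup G]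

lemma card_msum {α : Type*} (L : Multiset (Multiset α)) :
    Multiset.card L.sum = (L.map Multiset.card).sum := Multiset.card_join L

/-- Any minimal zero-sum sequence over a finite group has length at most `|G|`. -/
lemma isMinZS_card_le [Finite G] {S : Multiset G}
    (hS : IsMinZS G S) :
    Multiset.card S ≤ Nat.card G := by
  obtain ⟨hne, hsum, hmin⟩ := hS
  set l := S.toList with hl
  have hlS : (l : Multiset G) = S := S.coe_toList
  set N := l.length with hN
  have hcard : Multiset.card S = N := by rw [← hlS]; simp; rfl
  have key : ∀ i j : Fin N, i < j → (l.take ((i:ℕ)+1)).sum ≠ (l.take ((j:ℕ)+1)).sum := by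
    intro i j hij heq
    set T := (l.take ((j:ℕ)+1)).drop ((i:ℕ)+1) with hT
    have hsplit : l.take ((j:ℕ)+1) = l.take ((i:ℕ)+1) ++ T := by
      conv_lhs => rw [← List.take_append_drop ((i:ℕ)+1) (l.take ((j:ℕ)+1))]
      rw [List.take_take, min_eq_left (by omega)]
    have hsum2 : (l.take ((j:ℕ)+1)).sum = (l.take ((i:ℕ)+1)).sum + T.sum := by
      rw [hsplit, List.sum_append]
    have hT0 : T.sum = 0 := by
      have := heq.trans hsum2
      exact (left_eq_add.mp this)
    have hlenT : T.length = (j:ℕ) - (i:ℕ) := by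
      simp [hT, List.length_drop, List.length_take]
      omega
    have hTsub : T.Sublist l :=
      ((List.drop_sublist _ _).trans (List.take_sublist _ _))
    have h1 : (↑T : Multiset G) ≤ S := by
      rw [← hlS]; exact Multiset.coe_le.mpr hTsub.subperm
    have hij' : (i : ℕ) < (j : ℕ) := hij
    have h2 : (↑T : Multiset G) ≠ 0 := by
      intro hzero
      have hTnil : T = [] := (Multiset.coe_eq_zero T).mp hzero
      rw [hTnil] at hlenT
      simp at hlenT
      omega
    have h3 : (↑T : Multiset G) ≠ S := by
      intro h
      have : Multiset.card (↑T : Multiset G) = Multiset.card S := by rw [h]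
      simp [hcard, hlenT] at this
      omega
    exact hmin _ h1 h2 h3 (by simpa using hT0)
  have hinj : Function.Injective (fun i : Fin N => (l.take ((i:ℕ)+1)).sum) := by
    intro i j h
    rcases lt_trichotomy i j with hlt | heq | hgt
    · exact absurd h (key i j hlt)
    · exact heq
    · exact absurd h.symm (key j i hgt)
  have := Nat.card_le_card_of_injective _ hinj
  simpa [hcard] using this

end Aux


section Aux2

variable {G : Type*} [AddCommGroup G]

lemma prod2_card {L : Multiset (Multiset G)}
    (h : ∀ U ∈ L, IsMinZS G U ∧ Multiset.card U = 2) :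
    Multiset.card L.sum = 2 * Multiset.card L := by
  induction L using Multiset.induction with
  | empty => simp
  | cons a s ih =>
    simp only [Multiset.sum_cons, Multiset.card_add, Multiset.card_cons]
    rw [(h a (Multiset.mem_cons_self a s)).2, ih (fun U hU => h U (Multiset.mem_cons_of_mem hU))]
    ring

lemma card_le_sum_of_one_le {s : Multiset ℕ} (h : ∀ x ∈ s, 1 ≤ x) :
    Multiset.card s ≤ s.sum := by
  induction s using Multiset.induction with
  | empty => simp
  | cons a s ih =>
    simp only [Multiset.card_cons, Multiset.sum_cons]
    have := h a (Multiset.mem_cons_self a s)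
    have := ih (fun x hx => h x (Multiset.mem_cons_of_mem hx))
    omega

lemma ukSet_bddAbove [Finite G] (K : ℕ) : BddAbove (UkSet G K) := by
  refine ⟨K * Nat.card G, fun m hm => ?_⟩
  obtain ⟨S, ⟨L, hLc, hLa, hLs⟩, ⟨L', hL'c, hL'a, hL's⟩⟩ := hm
  have h1 : m ≤ Multiset.card S := by
    rw [← hL's, ← hL'c, card_msum]
    have : Multiset.card L' = Multiset.card (L'.map Multiset.card) := by simp
    rw [this]
    refine card_le_sum_of_one_le ?_
    intro x hx
    obtain ⟨U, hU, rfl⟩ := Multiset.mem_map.mp hx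
    exact Multiset.card_pos.mpr (hL'a U hU).1
  have h2 : Multiset.card S ≤ K * Nat.card G := by
    rw [← hLs, card_msum]
    calc (L.map Multiset.card).sum ≤ Multiset.card (L.map Multiset.card) • Nat.card G := by
          refine Multiset.sum_le_card_nsmul _ _ ?_
          intro x hx
          obtain ⟨U, hU, rfl⟩ := Multiset.mem_map.mp hx
          exact isMinZS_card_le (hLa U hU)
      _ = K * Nat.card G := by simp [hLc]
  omega

end Aux2

/-- If `A ∈ B(G)` is nice with a factorization into `2k+1` atoms of length
`D^*(G)`, then `2k+1` and `k·D^*(G) + ⌊D^*(G)/2⌋` belong to `L(A)`; consequently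
`ρ_{2k+1}(G) ≥ k·D^*(G) + ⌊D^*(G)/2⌋`. -/
theorem stmt10 (G : Type*) [AddCommGroup G] [DecidableEq G] (r : ℕ) (n : Fin r → ℕ)
    (h1 : ∀ i, 1 < n i) (hdvd : ∀ i j : Fin r, i ≤ j → n i ∣ n j)
    (e : G ≃+ ((i : Fin r) → ZMod (n i)))
    (d : ℕ) (hd : d = 1 + ∑ i, (n i - 1))
    (k : ℕ) (A : Multiset G) (hA : NiceWith G d k A) :
    (2 * k + 1) ∈ LSet G A ∧ (k * d + d / 2) ∈ LSet G A ∧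
      k * d + d / 2 ≤ rho G (2 * k + 1) := by
  haveI : ∀ i, NeZero (n i) := fun i => ⟨by have := h1 i; omega⟩
  haveI : Finite G := Finite.of_equiv _ e.symm.toEquiv
  obtain ⟨hk, U, g, hU, hUA, hgU, hcase⟩ := hA
  set G₀ := ∑ i, ({g i} : Multiset G) with hG₀
  have hG₀A : G₀ ≤ A := by
    rw [← hUA]
    exact Finset.sum_le_sum (fun i _ => Multiset.singleton_le.mpr (hgU i))
  have hcardFinSum : ∀ (m : ℕ) (f : Fin m → Multiset G),
      Multiset.card (∑ i, f i) = ∑ i, Multiset.card (f i) := by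
    intro m f
    rw [show (∑ i, f i) = (Finset.univ.val.map f).sum from rfl, card_msum,
      Multiset.map_map]
    rfl
  have hcardA : Multiset.card A = (2 * k + 1) * d := by
    rw [← hUA, hcardFinSum]
    simp [(fun i => (hU i).2)]
  have hcardG₀ : Multiset.card G₀ = 2 * k + 1 := by
    rw [hG₀, hcardFinSum]; simp
  -- Part 1
  have part1 : IsProdOfAtoms G (2 * k + 1) A := by
    refine ⟨Finset.univ.val.map U, by simp, ?_, ?_⟩
    · intro V hV
      obtain ⟨i, _, rfl⟩ := Multiset.mem_map.mp hV
      exact (hU i).1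
    · rw [← hUA]; rfl
  -- Part 2
  have part2 : IsProdOfAtoms G (k * d + d / 2) A := by
    rcases hcase with ⟨hodd, ⟨L₂, hL₂, hL₂s⟩, W, hW, hWcard, hWsum⟩ |
      ⟨heven, h, hhmem, ⟨L₂, hL₂, hL₂s⟩, ⟨L₃, hL₃, hL₃s⟩⟩
    · -- odd case
      have hsumeq : L₂.sum + G₀ = A := by
        rw [hL₂s]; exact tsub_add_cancel_of_le hG₀A
      have hcount : 2 * Multiset.card L₂ + (2 * k + 1) = (2 * k + 1) * d := by
        have := congrArg Multiset.card hsumeq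
        rw [Multiset.card_add, prod2_card hL₂, hcardG₀, hcardA] at this
        omega
      obtain ⟨t, ht⟩ := hodd
      have hgoal : Multiset.card L₂ + k = k * d + d / 2 := by
        have e1 : (2 * k + 1) * d = 2 * (2 * (k * t)) + 2 * k + 2 * t + 1 := by
          rw [ht]; ring
        have e2 : k * d = 2 * (k * t) + k := by rw [ht]; ring
        have e3 : d / 2 = t := by omega
        rw [e2, e3]
        rw [e1] at hcount
        omega
      refine ⟨L₂ + Finset.univ.val.map W, ?_, ?_, ?_⟩
      · rw [Multiset.card_add]
        have hm : Multiset.card (Finset.univ.val.map W) = k := by simp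
        omega
      · intro V hV
        rcases Multiset.mem_add.mp hV with hV | hV
        · exact (hL₂ V hV).1
        · obtain ⟨j, _, rfl⟩ := Multiset.mem_map.mp hV
          exact hW j
      · rw [Multiset.sum_add]
        show L₂.sum + (∑ j, W j) = A
        rw [hWsum]
        exact hsumeq
    · -- even case
      have hX : G₀ + {h} ≤ A := by
        have h1' : ({h} : Multiset G) ≤ A - G₀ := Multiset.singleton_le.mpr hhmem
        calc G₀ + {h} ≤ G₀ + (A - G₀) := add_le_add le_rfl h1'
          _ = A := add_tsub_cancel_of_le hG₀A
      have hsumeq : L₂.sum + (G₀ + {h}) = A := by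
        rw [hL₂s]; exact tsub_add_cancel_of_le hX
      have hcount : 2 * Multiset.card L₂ + (2 * k + 2) = (2 * k + 1) * d := by
        have := congrArg Multiset.card hsumeq
        rw [Multiset.card_add, prod2_card hL₂, Multiset.card_add, hcardG₀, hcardA] at this
        simp at this
        omega
      have hcount3 : 2 * Multiset.card L₃ = 2 * k + 2 := by
        have := congrArg Multiset.card hL₃s
        rw [prod2_card hL₃, Multiset.card_add, hcardG₀] at this
        simp at this
        omega
      obtain ⟨t, ht⟩ := heven
      have hgoal : Multiset.card L₂ + Multiset.card L₃ = k * d + d / 2 := by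
        have e1 : (2 * k + 1) * d = 2 * (2 * (k * t)) + 2 * t := by
          rw [ht]; ring
        have e2 : k * d = 2 * (k * t) := by rw [ht]; ring
        have e3 : d / 2 = t := by omega
        rw [e2, e3]
        rw [e1] at hcount
        omega
      refine ⟨L₂ + L₃, by simp [hgoal], ?_, ?_⟩
      · intro V hV
        rcases Multiset.mem_add.mp hV with hV | hV
        · exact (hL₂ V hV).1
        · exact (hL₃ V hV).1
      · rw [Multiset.sum_add, hL₃s, hsumeq]
  refine ⟨part1, part2, ?_⟩
  exact le_csSup (ukSet_bddAbove (2 * k + 1)) ⟨A, part1, part2⟩
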